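/- Coupon collector's problem: let N ≥ 1 be a natural number and let (X_i)_{i∈ℕ} be an i.i.d. sequence of random variables each uniformly distributed on Fin N (formally, the coordinate maps on the countable product of the uniform probability measure on Fin N). Define the stopping time T(ω) as the least t such that {X_1(ω), …, X_t(ω)} = Fin N. Then the expectation of T equals N · ∑_{k=1}^{N} 1/k (which is N·ln N up to lower-order terms). -/

import Mathlib

open MeasureTheory ProbabilityTheory
open scoped ENNReal

open Finset in
lemma coupon_alt_sum (n : ℕ) :
    ∑ k ∈ Finset.range n, (-1:ℝ)^k * (n.choose (k+1)) / (k+1)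
      = ∑ k ∈ Finset.range n, (1:ℝ)/(k+1) := by
  induction n with
  | zero => simp
  | succ n ih =>
    have h1 : ∀ k ∈ Finset.range (n+1), (-1:ℝ)^k * ((n+1).choose (k+1)) / (k+1)
        = (-1:ℝ)^k * (n.choose k) / (k+1) + (-1:ℝ)^k * (n.choose (k+1)) / (k+1) := by
      intro k _
      rw [Nat.choose_succ_succ]
      push_cast
      ring
    rw [Finset.sum_congr rfl h1, Finset.sum_add_distrib]
    have hB : ∑ k ∈ Finset.range (n+1), (-1:ℝ)^k * (n.choose (k+1)) / (k+1)
        = ∑ k ∈ Finset.range n, (-1:ℝ)^k * (n.choose (k+1)) / (k+1) := by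
      rw [Finset.sum_range_succ, Nat.choose_succ_self]
      simp
    have hsum : ∑ k ∈ Finset.range (n+1), (-1:ℝ)^k * ((n+1).choose (k+1)) = 1 := by
      have hz := Int.alternating_sum_range_choose_of_ne (n := n+1) (by omega)
      have hzr : ∑ m ∈ Finset.range (n+2), (-1:ℝ)^m * ((n+1).choose m) = 0 := by
        exact_mod_cast congrArg (Int.cast : ℤ → ℝ) hz
      rw [Finset.sum_range_succ'] at hzr
      have h2 : ∀ i ∈ Finset.range (n+1), (-1:ℝ)^(i+1) * ((n+1).choose (i+1))
          = -((-1:ℝ)^i * ((n+1).choose (i+1))) := by intro i _; ring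
      rw [Finset.sum_congr rfl h2, Finset.sum_neg_distrib] at hzr
      simp at hzr
      linarith
    have hA : ∑ k ∈ Finset.range (n+1), (-1:ℝ)^k * (n.choose k) / (k+1) = 1/(n+1) := by
      have key : ∀ k ∈ Finset.range (n+1), (-1:ℝ)^k * (n.choose k) / (k+1)
          = (1/(n+1)) * ((-1:ℝ)^k * ((n+1).choose (k+1))) := by
        intro k _
        have h := Nat.add_one_mul_choose_eq n k
        have h' : ((n:ℝ)+1) * (n.choose k) = ((n+1).choose (k+1) : ℝ) * ((k:ℝ)+1) := by
          exact_mod_cast congrArg (Nat.cast : ℕ → ℝ) h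
        have e1 : (n.choose k : ℝ)/((k:ℝ)+1) = ((n+1).choose (k+1):ℝ)/((n:ℝ)+1) := by
          rw [div_eq_div_iff (by positivity) (by positivity)]
          linarith
        calc (-1:ℝ)^k * (n.choose k) / (k+1) = (-1:ℝ)^k * ((n.choose k : ℝ)/((k:ℝ)+1)) := by
              ring
          _ = (-1:ℝ)^k * (((n+1).choose (k+1):ℝ)/((n:ℝ)+1)) := by rw [e1]
          _ = (1/(n+1)) * ((-1:ℝ)^k * ((n+1).choose (k+1))) := by ring
      rw [Finset.sum_congr rfl key, ← Finset.mul_sum, hsum]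
      simp
    rw [hB, hA, ih, Finset.sum_range_succ]
    ring

theorem stmt_4 {Ω : Type*} [MeasurableSpace Ω] (μ : Measure Ω) [IsProbabilityMeasure μ]
    (N : ℕ) (hN : 0 < N)
    (X : ℕ → Ω → Fin N)
    (hmeas : ∀ i : ℕ, Measurable (X i))
    (hindep : iIndepFun X μ)
    (hunif : ∀ i : ℕ, Measure.map (X i) μ =
      (@PMF.uniformOfFintype (Fin N) _ ⟨⟨0, hN⟩⟩).toMeasure)
    (T : Ω → ℕ)
    (hT : ∀ ω : Ω, T ω =
      sInf {t : ℕ | ∀ y : Fin N, ∃ i : ℕ, 1 ≤ i ∧ i ≤ t ∧ X i ω = y}) :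
    ∫ ω, (T ω : ℝ) ∂μ = N * ∑ k ∈ Finset.Icc 1 N, (1 : ℝ) / k := by
  classical
  haveI : Nonempty (Fin N) := ⟨⟨0, hN⟩⟩
  have hN0 : (N : ℝ) ≠ 0 := Nat.cast_ne_zero.mpr hN.ne'
  -- the basic sets
  set A : ℕ → Set Ω := fun t => ⋂ y : Fin N, ⋃ i ∈ Finset.Icc 1 t, X i ⁻¹' {y} with hA_def
  set M : Fin N → ℕ → Set Ω := fun y t => ⋂ i ∈ Finset.Icc 1 t, X i ⁻¹' {y}ᶜ with hM_def
  have hA_meas : ∀ t, MeasurableSet (A t) :=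
    fun t => MeasurableSet.iInter fun y =>
      (Finset.Icc 1 t).measurableSet_biUnion fun i _ => (hmeas i) (measurableSet_singleton y)
  have hM_meas : ∀ y t, MeasurableSet (M y t) :=
    fun y t => (Finset.Icc 1 t).measurableSet_biInter fun i _ =>
      (hmeas i) (measurableSet_singleton y).compl
  have hmem_A : ∀ t ω, ω ∈ A t ↔ ∀ y : Fin N, ∃ i : ℕ, 1 ≤ i ∧ i ≤ t ∧ X i ω = y := by
    intro t ω
    simp only [hA_def, Set.mem_iInter, Set.mem_iUnion, Set.mem_preimage,
      Set.mem_singleton_iff, Finset.mem_Icc, exists_prop]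
    exact ⟨fun h y => by obtain ⟨i, hi, hx⟩ := h y; exact ⟨i, hi.1, hi.2, hx⟩,
      fun h y => by obtain ⟨i, h1, h2, hx⟩ := h y; exact ⟨i, ⟨h1, h2⟩, hx⟩⟩
  have hmono : ∀ s t, s ≤ t → A s ⊆ A t := by
    intro s t hst ω hω
    rw [hmem_A] at hω ⊢
    intro y
    obtain ⟨i, h1, h2, h3⟩ := hω y
    exact ⟨i, h1, h2.trans hst, h3⟩
  have hcomplA : ∀ t, (A t)ᶜ = ⋃ y : Fin N, M y t := by
    intro t
    simp only [hA_def, hM_def, Set.compl_iInter, Set.compl_iUnion, Set.preimage_compl]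
  -- single preimage measure
  have hXmeasure : ∀ (i : ℕ) (s : Finset (Fin N)),
      μ (X i ⁻¹' (↑s : Set (Fin N))) = (s.card : ℝ≥0∞) / N := by
    intro i s
    have hE : MeasurableSet (↑s : Set (Fin N)) := (Set.to_countable _).measurableSet
    rw [← Measure.map_apply (hmeas i) hE, hunif i,
      PMF.toMeasure_uniformOfFintype_apply _ hE, Fintype.card_fin,
      ← Set.toFinset_card, Finset.toFinset_coe]
  -- the key independence computation
  have hkey : ∀ (t : ℕ) (u : Finset (Fin N)),
      μ (⋂ y ∈ u, M y t) = (((N - u.card : ℕ) : ℝ≥0∞) / N)^t := by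
    intro t u
    have hswap : ⋂ y ∈ u, M y t = ⋂ i ∈ Finset.Icc 1 t, X i ⁻¹' (↑(uᶜ) : Set (Fin N)) := by
      ext ω
      simp only [hM_def, Set.mem_iInter, Set.mem_preimage, Set.mem_compl_iff,
        Set.mem_singleton_iff, Finset.mem_coe, Finset.coe_compl, Finset.mem_compl]
      constructor
      · intro h i hi hXi
        exact h _ hXi i hi rfl
      · intro h y hy i hi hXi
        exact h i hi (hXi ▸ hy)
    have hcard : (uᶜ : Finset (Fin N)).card = N - u.card := by
      rw [Finset.card_compl, Fintype.card_fin]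
    rw [hswap, hindep.measure_inter_preimage_eq_mul (Finset.Icc 1 t)
      (fun i _ => (Set.to_countable _).measurableSet)]
    calc ∏ i ∈ Finset.Icc 1 t, μ (X i ⁻¹' (↑(uᶜ) : Set (Fin N)))
        = ∏ _i ∈ Finset.Icc 1 t, (((N - u.card : ℕ) : ℝ≥0∞) / N) := by
          refine Finset.prod_congr rfl fun i _ => ?_
          rw [hXmeasure i, hcard]
      _ = (((N - u.card : ℕ) : ℝ≥0∞) / N)^t := by
          rw [Finset.prod_const, Nat.card_Icc]
          simp
  -- the geometric ratio
  set c : ℝ≥0∞ := ((N - 1 : ℕ) : ℝ≥0∞) / N with hc_def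
  have hc1 : c < 1 := by
    rw [hc_def, ENNReal.div_lt_iff (Or.inl (by exact_mod_cast hN.ne'))
      (Or.inl (ENNReal.natCast_ne_top N)), one_mul]
    exact_mod_cast Nat.sub_lt hN one_pos
  have hMone : ∀ (y : Fin N) (t : ℕ), μ (M y t) = c^t := by
    intro y t
    have := hkey t {y}
    rw [Finset.set_biInter_singleton, Finset.card_singleton] at this
    rw [this, hc_def]
  have hbound : ∀ t, μ ((A t)ᶜ) ≤ (N : ℝ≥0∞) * c^t := by
    intro t
    rw [hcomplA t]
    calc μ (⋃ y : Fin N, M y t) ≤ ∑ y : Fin N, μ (M y t) := measure_iUnion_fintype_le μ _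
      _ = (N : ℝ≥0∞) * c^t := by
          simp [hMone, Finset.sum_const, Finset.card_univ]
  have hU : μ (⋃ t, A t)ᶜ = 0 := by
    have hsub : ∀ t, (⋃ s, A s)ᶜ ⊆ (A t)ᶜ :=
      fun t => Set.compl_subset_compl.mpr (Set.subset_iUnion A t)
    have htend : Filter.Tendsto (fun t => (N : ℝ≥0∞) * c^t) Filter.atTop (nhds 0) := by
      have h0 : Filter.Tendsto (fun t : ℕ => c^t) Filter.atTop (nhds 0) :=
        ENNReal.tendsto_pow_atTop_nhds_zero_of_lt_one hc1
      have := ENNReal.Tendsto.const_mul h0 (Or.inr (ENNReal.natCast_ne_top N))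
      simpa using this
    have hle : ∀ t, μ (⋃ s, A s)ᶜ ≤ (N : ℝ≥0∞) * c^t :=
      fun t => (measure_mono (hsub t)).trans (hbound t)
    exact nonpos_iff_eq_zero.mp (ge_of_tendsto' htend hle)
  -- description of the tail events of T
  have hTset : ∀ ω, T ω = sInf {t | ω ∈ A t} := by
    intro ω
    rw [hT ω]
    congr 1
    ext t
    exact (hmem_A t ω).symm
  have hB : ∀ n, {ω | n < T ω} = (⋃ t, A t) ∩ (A n)ᶜ := by
    intro n
    ext ω
    simp only [Set.mem_setOf_eq, Set.mem_inter_iff, Set.mem_iUnion, Set.mem_compl_iff]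
    rw [hTset ω]
    constructor
    · intro h
      have hne : {t | ω ∈ A t}.Nonempty := by
        by_contra hne
        rw [Set.not_nonempty_iff_eq_empty] at hne
        rw [hne, Nat.sInf_empty] at h
        omega
      obtain ⟨t, ht⟩ := hne
      exact ⟨⟨t, ht⟩, fun hA' => absurd (Nat.sInf_le hA') (not_le.mpr h)⟩
    · rintro ⟨⟨t, ht⟩, hnot⟩
      by_contra h
      push_neg at h
      have hm : sInf {t | ω ∈ A t} ∈ {t | ω ∈ A t} := Nat.sInf_mem ⟨t, ht⟩
      exact hnot (hmono _ _ h hm)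
  have hBmeas : ∀ n, MeasurableSet {ω | n < T ω} := by
    intro n
    rw [hB n]
    exact ((MeasurableSet.iUnion hA_meas).inter (hA_meas n).compl)
  have hBmu : ∀ n, μ {ω | n < T ω} = μ ((A n)ᶜ) := by
    intro n
    rw [hB n, Set.inter_comm, measure_inter_conull hU]
  -- measurability of T
  have hTmeas : Measurable T := by
    apply measurable_to_countable'
    intro n
    cases n with
    | zero =>
      have : T ⁻¹' {0} = {ω | 0 < T ω}ᶜ := by
        ext ω; simp only [Set.mem_preimage, Set.mem_singleton_iff, Set.mem_compl_iff,
          Set.mem_setOf_eq]; omega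
      rw [this]
      exact (hBmeas 0).compl
    | succ m =>
      have : T ⁻¹' {m + 1} = {ω | m < T ω} ∩ {ω | m + 1 < T ω}ᶜ := by
        ext ω; simp only [Set.mem_preimage, Set.mem_singleton_iff, Set.mem_inter_iff,
          Set.mem_compl_iff, Set.mem_setOf_eq]; omega
      rw [this]
      exact (hBmeas m).inter (hBmeas (m + 1)).compl
  -- the lintegral of T
  have hpoint : ∀ ω, ((T ω : ℕ) : ℝ≥0∞)
      = ∑' n, Set.indicator {ω' | n < T ω'} (fun _ => (1 : ℝ≥0∞)) ω := by
    intro ω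
    rw [tsum_eq_sum (s := Finset.range (T ω))
      (fun n hn => Set.indicator_of_notMem (by simpa using hn) _)]
    rw [Finset.sum_congr rfl
      (fun n hn => Set.indicator_of_mem (by simpa using Finset.mem_range.mp hn) _)]
    simp
  have hlint : ∫⁻ ω, ((T ω : ℕ) : ℝ≥0∞) ∂μ = ∑' n, μ ((A n)ᶜ) := by
    rw [lintegral_congr hpoint,
      lintegral_tsum (fun n => (measurable_const.indicator (hBmeas n)).aemeasurable)]
    congr 1
    funext n
    rw [← hBmu n, ← lintegral_indicator_one (hBmeas n)]
    rfl
  have hfin : ∑' n, μ ((A n)ᶜ) ≠ ⊤ := by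
    have hle : ∑' n, μ ((A n)ᶜ) ≤ (N : ℝ≥0∞) * (1 - c)⁻¹ := by
      calc ∑' n, μ ((A n)ᶜ) ≤ ∑' n, (N : ℝ≥0∞) * c^n := ENNReal.tsum_le_tsum hbound
        _ = (N : ℝ≥0∞) * (1 - c)⁻¹ := by rw [ENNReal.tsum_mul_left, ENNReal.tsum_geometric]
    exact ne_top_of_le_ne_top (ENNReal.mul_ne_top (ENNReal.natCast_ne_top N)
      (ENNReal.inv_ne_top.mpr (tsub_pos_iff_lt.mpr hc1).ne')) hle
  have hInt : ∫ ω, (T ω : ℝ) ∂μ = (∑' n, μ ((A n)ᶜ)).toReal := by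
    rw [integral_eq_lintegral_of_nonneg_ae (Filter.Eventually.of_forall fun ω => Nat.cast_nonneg _)
      ((measurable_from_top.comp hTmeas : Measurable fun ω => ((T ω : ℕ) : ℝ)).aestronglyMeasurable)]
    congr 1
    rw [← hlint]
    apply lintegral_congr
    intro ω
    rw [ENNReal.ofReal_natCast]
  -- real-valued ratio
  set r : ℕ → ℝ := fun j => ((N - j : ℕ) : ℝ) / N with hr_def
  have hkeyR : ∀ (t : ℕ) (u : Finset (Fin N)),
      (μ (⋂ y ∈ u, M y t)).toReal = (r u.card)^t := by
    intro t u
    rw [hkey t u, ENNReal.toReal_pow, ENNReal.toReal_div,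
      ENNReal.toReal_natCast, ENNReal.toReal_natCast]
  -- indicator identities
  have hprodind : ∀ (u : Finset (Fin N)) (t : ℕ) (ω : Ω),
      (∏ y ∈ u, Set.indicator (M y t) (fun _ => (1:ℝ)) ω)
        = Set.indicator (⋂ y ∈ u, M y t) (fun _ => (1:ℝ)) ω := by
    intro u t ω
    by_cases h : ω ∈ ⋂ y ∈ u, M y t
    · rw [Set.indicator_of_mem h]
      refine Finset.prod_eq_one fun y hy => ?_
      rw [Set.indicator_of_mem (Set.mem_iInter₂.mp h y hy)]
    · rw [Set.indicator_of_notMem h]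
      rw [Set.mem_iInter₂] at h
      push_neg at h
      obtain ⟨y, hy, hy'⟩ := h
      exact Finset.prod_eq_zero hy (Set.indicator_of_notMem hy' _)
  have hind : ∀ (t : ℕ) (ω : Ω), Set.indicator (A t) (fun _ => (1:ℝ)) ω
      = ∏ y : Fin N, ((1:ℝ) - Set.indicator (M y t) (fun _ => (1:ℝ)) ω) := by
    intro t ω
    by_cases h : ω ∈ A t
    · rw [Set.indicator_of_mem h]
      have hnot : ∀ y, ω ∉ M y t := by
        intro y hy
        have hc' : ω ∈ (A t)ᶜ := by rw [hcomplA t]; exact Set.mem_iUnion.mpr ⟨y, hy⟩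
        exact hc' h
      rw [Finset.prod_congr rfl (fun y _ => by rw [Set.indicator_of_notMem (hnot y)])]
      simp
    · rw [Set.indicator_of_notMem h]
      have hmem : ω ∈ ⋃ y, M y t := by rw [← hcomplA t]; exact h
      obtain ⟨y, hy⟩ := Set.mem_iUnion.mp hmem
      symm
      refine Finset.prod_eq_zero (Finset.mem_univ y) ?_
      rw [Set.indicator_of_mem hy]
      ring
  -- inclusion-exclusion for μ (A t)ᶜ
  have hF : ∀ t, (μ ((A t)ᶜ)).toReal
      = ∑ u ∈ ((Finset.univ : Finset (Fin N)).powerset).erase ∅,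
          (-1:ℝ)^(u.card+1) * (r u.card)^t := by
    intro t
    have h1 : (μ ((A t)ᶜ)).toReal = 1 - (μ (A t)).toReal := by
      rw [measure_compl (hA_meas t) (measure_ne_top μ _), measure_univ,
        ENNReal.toReal_sub_of_le prob_le_one ENNReal.one_ne_top, ENNReal.toReal_one]
    have h2 : (μ (A t)).toReal
        = ∑ u ∈ (Finset.univ : Finset (Fin N)).powerset, (-1:ℝ)^u.card * (r u.card)^t := by
      have hAint : (μ (A t)).toReal = ∫ ω, Set.indicator (A t) (fun _ => (1:ℝ)) ω ∂μ := by
        rw [integral_indicator_const (1:ℝ) (hA_meas t)]; simp; rfl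
      have hptwise : ∀ ω, Set.indicator (A t) (fun _ => (1:ℝ)) ω
          = ∑ u ∈ (Finset.univ : Finset (Fin N)).powerset,
              (-1:ℝ)^u.card * Set.indicator (⋂ y ∈ u, M y t) (fun _ => (1:ℝ)) ω := by
        intro ω
        rw [hind t ω, Finset.prod_sub (fun _ : Fin N => (1:ℝ))
          (fun y => Set.indicator (M y t) (fun _ => (1:ℝ)) ω) Finset.univ]
        refine Finset.sum_congr rfl fun u hu => ?_
        rw [Finset.prod_const_one, mul_one, hprodind u t ω]
      rw [hAint]
      calc ∫ ω, Set.indicator (A t) (fun _ => (1:ℝ)) ω ∂μ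
          = ∫ ω, ∑ u ∈ (Finset.univ : Finset (Fin N)).powerset,
              (-1:ℝ)^u.card * Set.indicator (⋂ y ∈ u, M y t) (fun _ => (1:ℝ)) ω ∂μ :=
            integral_congr_ae (Filter.Eventually.of_forall hptwise)
        _ = ∑ u ∈ (Finset.univ : Finset (Fin N)).powerset,
              ∫ ω, (-1:ℝ)^u.card * Set.indicator (⋂ y ∈ u, M y t) (fun _ => (1:ℝ)) ω ∂μ :=
            integral_finset_sum _ (fun u _ =>
              (((integrable_const (1:ℝ)).indicator
                (Finset.measurableSet_biInter _ (fun y _ => hM_meas y t))).const_mul _))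
        _ = ∑ u ∈ (Finset.univ : Finset (Fin N)).powerset, (-1:ℝ)^u.card * (r u.card)^t := by
            refine Finset.sum_congr rfl fun u hu => ?_
            rw [integral_const_mul, integral_indicator_const (1:ℝ)
              (Finset.measurableSet_biInter _ (fun y _ => hM_meas y t)), smul_eq_mul, mul_one,
              measureReal_def, hkeyR t u]
    have hr0 : r 0 = 1 := by
      simp only [hr_def, Nat.sub_zero]
      exact div_self hN0
    rw [h1, h2, ← Finset.add_sum_erase _ _ (Finset.empty_mem_powerset (Finset.univ : Finset (Fin N))),
      Finset.card_empty, hr0, pow_zero, one_pow, mul_one]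
    have hneg : ∀ u ∈ ((Finset.univ : Finset (Fin N)).powerset).erase ∅,
        (-1:ℝ)^(u.card+1) * (r u.card)^t = -((-1:ℝ)^u.card * (r u.card)^t) := fun u _ => by ring
    rw [Finset.sum_congr rfl hneg, Finset.sum_neg_distrib]
    ring
  -- bounds on r
  have hr_card : ∀ u ∈ ((Finset.univ : Finset (Fin N)).powerset).erase ∅,
      1 ≤ u.card ∧ u.card ≤ N := by
    intro u hu
    rcases Finset.mem_erase.mp hu with ⟨hne, hup⟩
    refine ⟨Finset.card_pos.mpr (Finset.nonempty_iff_ne_empty.mpr hne), ?_⟩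
    have := Finset.card_le_card (Finset.mem_powerset.mp hup)
    simpa [Finset.card_univ] using this
  have hr_lt : ∀ u ∈ ((Finset.univ : Finset (Fin N)).powerset).erase ∅,
      0 ≤ r u.card ∧ r u.card < 1 := by
    intro u hu
    obtain ⟨h1', _⟩ := hr_card u hu
    constructor
    · exact div_nonneg (Nat.cast_nonneg _) (Nat.cast_nonneg _)
    · simp only [hr_def]
      rw [div_lt_one (by exact_mod_cast hN)]
      exact_mod_cast Nat.sub_lt hN h1'
  have hsummable : ∀ u ∈ ((Finset.univ : Finset (Fin N)).powerset).erase ∅,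
      Summable (fun t : ℕ => (-1:ℝ)^(u.card+1) * (r u.card)^t) :=
    fun u hu => (summable_geometric_of_lt_one (hr_lt u hu).1 (hr_lt u hu).2).mul_left _
  have hswap : ∑' t, (μ ((A t)ᶜ)).toReal
      = ∑ u ∈ ((Finset.univ : Finset (Fin N)).powerset).erase ∅,
          ∑' t : ℕ, (-1:ℝ)^(u.card+1) * (r u.card)^t := by
    rw [tsum_congr hF]
    exact Summable.tsum_finsetSum hsummable
  have hgeom : ∀ u ∈ ((Finset.univ : Finset (Fin N)).powerset).erase ∅,
      ∑' t : ℕ, (-1:ℝ)^(u.card+1) * (r u.card)^t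
        = (-1:ℝ)^(u.card+1) * ((N:ℝ) / u.card) := by
    intro u hu
    obtain ⟨hj1, hjN⟩ := hr_card u hu
    rw [tsum_mul_left, tsum_geometric_of_lt_one (hr_lt u hu).1 (hr_lt u hu).2]
    congr 1
    have hcast : ((N - u.card : ℕ) : ℝ) = (N:ℝ) - u.card := by
      exact Nat.cast_sub hjN
    simp only [hr_def]
    rw [hcast, one_sub_div hN0,
      show (N:ℝ) - ((N:ℝ) - u.card) = (u.card : ℝ) from by ring, inv_div]
  have hfinal : ∑ u ∈ ((Finset.univ : Finset (Fin N)).powerset).erase ∅,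
      (-1:ℝ)^(u.card+1) * ((N:ℝ) / u.card) = N * ∑ k ∈ Finset.Icc 1 N, (1:ℝ)/k := by
    have hzero : (-1:ℝ)^((∅ : Finset (Fin N)).card+1) * ((N:ℝ)/((∅ : Finset (Fin N)).card : ℝ)) = 0 := by
      simp
    rw [Finset.sum_erase (f := fun u : Finset (Fin N) => (-1:ℝ)^(u.card+1) * ((N:ℝ)/(u.card:ℝ))) _ hzero,
      Finset.sum_powerset_apply_card (fun j => (-1:ℝ)^(j+1) * ((N:ℝ)/(j:ℝ)))
        (x := (Finset.univ : Finset (Fin N)))]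
    simp only [Finset.card_univ, Fintype.card_fin, nsmul_eq_mul]
    rw [Finset.sum_range_succ']
    have hIcc : ∑ k ∈ Finset.Icc 1 N, (1:ℝ)/k = ∑ i ∈ Finset.range N, (1:ℝ)/(i+1) := by
      rw [← Finset.Ico_add_one_right_eq_Icc, Finset.sum_Ico_eq_sum_range]
      have hNN : N + 1 - 1 = N := by omega
      rw [hNN]
      refine Finset.sum_congr rfl fun i _ => ?_
      rw [add_comm]
      push_cast
      ring
    rw [hIcc, ← coupon_alt_sum N, Finset.mul_sum]
    have hz0 : ((N:ℕ).choose 0 : ℝ) * ((-1:ℝ)^(0+1) * ((N:ℝ)/((0:ℕ):ℝ))) = 0 := by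
      simp
    rw [hz0, add_zero]
    refine Finset.sum_congr rfl fun i _ => ?_
    push_cast
    ring
  -- final assembly
  rw [hInt, ENNReal.tsum_toReal_eq (fun n => measure_ne_top μ _), hswap,
    Finset.sum_congr rfl hgeom, hfinal]
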